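/- Let H and Δ be real symmetric n×n matrices with H positive definite, let Γ be a real n×n matrix, and let c > 0 be such that ΓᵀHΓ ⪯ H − c·I in the Loewner order. Then ‖Δ − ΓᵀΔΓ‖_F ≥ (c² / ‖H‖²)·‖Δ‖_F, where ‖H‖ is the spectral norm of H and ‖·‖_F is the Frobenius norm. -/

import Mathlib

open Matrix

/-- Spectral norm: operator norm induced by the Euclidean norm. -/
noncomputable def specNorm {m n : ℕ} (A : Matrix (Fin m) (Fin n) ℝ) : ℝ :=
  ‖LinearMap.toContinuousLinearMap (Matrix.toEuclideanLin A)‖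

/-- Frobenius norm: square root of the sum of squares of the entries. -/
noncomputable def frobNorm {m n : ℕ} (A : Matrix (Fin m) (Fin n) ℝ) : ℝ :=
  Real.sqrt (∑ i, ∑ j, A i j ^ 2)
namespace StmtAux

variable {n : ℕ}

local notation "Mn" => Matrix (Fin n) (Fin n) ℝ

noncomputable def E2 (v : Fin n → ℝ) : EuclideanSpace ℝ (Fin n) :=
  (WithLp.equiv 2 (Fin n → ℝ)).symm v

lemma specNorm_nonneg (A : Mn) : 0 ≤ specNorm A := norm_nonneg _

lemma e2_norm_sq (v : Fin n → ℝ) : ‖E2 v‖ ^ 2 = v ⬝ᵥ v := by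
  rw [E2, EuclideanSpace.norm_eq, Real.sq_sqrt (by positivity)]
  simp [dotProduct, Real.norm_eq_abs, sq_abs, pow_two]

lemma spec_mulVec (A : Mn) (v : Fin n → ℝ) :
    ‖E2 (A *ᵥ v)‖ ≤ specNorm A * ‖E2 v‖ := by
  have h := (LinearMap.toContinuousLinearMap (Matrix.toEuclideanLin A)).le_opNorm (E2 v)
  simpa only [specNorm, E2, LinearMap.coe_toContinuousLinearMap',
    WithLp.equiv_symm_apply, Matrix.toEuclideanLin_apply_piLp_toLp] using h

lemma dot_sq_le (A : Mn) (v : Fin n → ℝ) :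
    (A *ᵥ v) ⬝ᵥ (A *ᵥ v) ≤ specNorm A ^ 2 * (v ⬝ᵥ v) := by
  rw [← e2_norm_sq, ← e2_norm_sq]
  have h := spec_mulVec A v
  nlinarith [norm_nonneg (E2 (A *ᵥ v)), norm_nonneg (E2 v), specNorm_nonneg A]

lemma dot_le_spec (A : Mn) (v : Fin n → ℝ) :
    v ⬝ᵥ (A *ᵥ v) ≤ specNorm A * (v ⬝ᵥ v) := by
  have h1 : v ⬝ᵥ (A *ᵥ v) = inner ℝ (E2 v) (E2 (A *ᵥ v)) := by
    simp [E2, PiLp.inner_apply, RCLike.inner_apply, dotProduct, mul_comm]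
  have h2 := real_inner_le_norm (E2 v) (E2 (A *ᵥ v))
  have h3 := spec_mulVec A v
  have h4 := e2_norm_sq v
  have h6 := mul_le_mul_of_nonneg_left h3 (norm_nonneg (E2 v))
  have h5 : specNorm A * ‖E2 v‖ ^ 2 = specNorm A * (v ⬝ᵥ v) := by rw [h4]
  nlinarith []

section L2
open scoped Matrix.Norms.L2Operator

lemma specNorm_eq_l2 {m k : ℕ} (A : Matrix (Fin m) (Fin k) ℝ) : specNorm A = ‖A‖ := rfl

lemma specNorm_transpose (A : Mn) : specNorm Aᵀ = specNorm A := by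
  rw [specNorm_eq_l2, specNorm_eq_l2, ← Matrix.conjTranspose_eq_transpose_of_trivial,
    Matrix.l2_opNorm_conjTranspose]

lemma specNorm_transpose_mul_self (A : Mn) :
    specNorm (Aᵀ * A) = specNorm A * specNorm A := by
  rw [specNorm_eq_l2, specNorm_eq_l2, ← Matrix.conjTranspose_eq_transpose_of_trivial,
    Matrix.l2_opNorm_conjTranspose_mul_self]

lemma specNorm_mul_le (A B : Mn) : specNorm (A * B) ≤ specNorm A * specNorm B := by
  rw [specNorm_eq_l2, specNorm_eq_l2, specNorm_eq_l2]
  exact Matrix.l2_opNorm_mul A B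

end L2

lemma specNorm_one_le : specNorm (1 : Mn) ≤ 1 := by
  have h : LinearMap.toContinuousLinearMap (Matrix.toEuclideanLin (1 : Mn)) =
      ContinuousLinearMap.id ℝ (EuclideanSpace ℝ (Fin n)) := by
    ext x
    simp [Matrix.toEuclideanLin_apply]
  rw [specNorm, h]
  exact ContinuousLinearMap.norm_id_le

lemma specNorm_pow_le (A : Mn) (k : ℕ) : specNorm (A ^ k) ≤ specNorm A ^ k := by
  induction k with
  | zero => simpa using specNorm_one_le
  | succ k ih =>
      rw [pow_succ, pow_succ]
      refine le_trans (specNorm_mul_le _ _) ?_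
      exact mul_le_mul ih (le_refl _) (specNorm_nonneg A) (pow_nonneg (specNorm_nonneg A) k)

lemma herm_transpose {A : Mn} (hA : A.IsHermitian) : Aᵀ = A := by
  rw [← Matrix.conjTranspose_eq_transpose_of_trivial, hA.eq]

lemma posSemidef_smul {A : Mn} (hA : A.PosSemidef) {t : ℝ} (ht : 0 ≤ t) :
    (t • A).PosSemidef := by
  refine Matrix.PosSemidef.of_dotProduct_mulVec_nonneg ?_ fun x => ?_
  · simp [Matrix.IsHermitian, Matrix.conjTranspose_smul, herm_transpose hA.1]
  · rw [Matrix.smul_mulVec, dotProduct_smul]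
    exact mul_nonneg ht (hA.dotProduct_mulVec_nonneg x)

lemma psd_dot {A : Mn} (hA : A.PosSemidef) (v : Fin n → ℝ) : 0 ≤ v ⬝ᵥ (A *ᵥ v) := by
  simpa using hA.dotProduct_mulVec_nonneg v

lemma psd_sub_dot {A B : Mn} (h : (A - B).PosSemidef) (v : Fin n → ℝ) :
    v ⬝ᵥ (B *ᵥ v) ≤ v ⬝ᵥ (A *ᵥ v) := by
  have := psd_dot h v
  rw [Matrix.sub_mulVec, dotProduct_sub] at this
  linarith

lemma smul_one_dot {t : ℝ} (v : Fin n → ℝ) :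
    v ⬝ᵥ ((t • (1 : Mn)) *ᵥ v) = t * (v ⬝ᵥ v) := by
  rw [Matrix.smul_mulVec, Matrix.one_mulVec, dotProduct_smul, smul_eq_mul]

lemma posSemidef_specNorm_smul_sub {A : Mn} (hA : A.IsHermitian) :
    (specNorm A • (1 : Mn) - A).PosSemidef := by
  refine Matrix.PosSemidef.of_dotProduct_mulVec_nonneg ?_ fun x => ?_
  · simp [Matrix.IsHermitian, Matrix.conjTranspose_sub, Matrix.conjTranspose_smul,
      herm_transpose hA]
  · have h := dot_le_spec A x
    have hx : star x = x := by funext i; simp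
    rw [hx, Matrix.sub_mulVec, dotProduct_sub, smul_one_dot]
    linarith

lemma le_of_sq_le_sq {a b : ℝ} (hb : 0 ≤ b) (h : a ^ 2 ≤ b ^ 2) (ha : 0 ≤ a) : a ≤ b := by
  nlinarith

set_option maxHeartbeats 1000000 in
lemma specNorm_le_of_le_smul {A : Mn} (hA : A.PosSemidef) {t : ℝ} (ht : 0 ≤ t)
    (h : (t • (1 : Mn) - A).PosSemidef) : specNorm A ≤ t := by
  refine ContinuousLinearMap.opNorm_le_bound _ ht fun x => ?_
  set v : Fin n → ℝ := (WithLp.equiv 2 (Fin n → ℝ)) x with hvdef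
  have hxv : E2 v = x := (WithLp.equiv 2 (Fin n → ℝ)).symm_apply_apply x
  rw [← hxv]
  have hAsym : Aᵀ = A := herm_transpose hA.1
  -- t • A - A * A is PSD
  obtain ⟨R, hRR, hRH⟩ : ∃ R : Mn, R * R = A ∧ Rᴴ = R :=
    open scoped MatrixOrder in
    ⟨CFC.sqrt A, CFC.sqrt_mul_sqrt_self A hA.nonneg, (CFC.sqrt_nonneg A).posSemidef.1.eq⟩
  have hAA : (t • A - A * A).PosSemidef := by
    have h2 := h.mul_mul_conjTranspose_same R
    have e : R * (t • (1 : Mn) - A) * Rᴴ = t • A - A * A := by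
      rw [hRH, Matrix.mul_sub, Matrix.sub_mul, Matrix.mul_smul, Matrix.smul_mul,
        mul_one, hRR]
      congr 1
      calc R * A * R = R * (R * R) * R := by rw [hRR]
        _ = (R * R) * (R * R) := by noncomm_ring
        _ = A * A := by rw [hRR]
    rwa [e] at h2
  have e1 : (A *ᵥ v) ⬝ᵥ (A *ᵥ v) = v ⬝ᵥ ((A * A) *ᵥ v) := by
    rw [← Matrix.mulVec_mulVec, Matrix.dotProduct_mulVec v, ← Matrix.mulVec_transpose,
      hAsym, dotProduct_comm]
  have e2 : v ⬝ᵥ ((A * A) *ᵥ v) ≤ t * (v ⬝ᵥ (A *ᵥ v)) := by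
    have := psd_sub_dot hAA v
    rwa [Matrix.smul_mulVec, dotProduct_smul, smul_eq_mul] at this
  have e3 : v ⬝ᵥ (A *ᵥ v) ≤ t * (v ⬝ᵥ v) := by
    have := psd_sub_dot h v
    rwa [smul_one_dot] at this
  have e4 : 0 ≤ v ⬝ᵥ (A *ᵥ v) := psd_dot hA v
  have e5 : 0 ≤ v ⬝ᵥ v := by
    have := e2_norm_sq v; nlinarith [norm_nonneg (E2 v)]
  have hnx : ‖E2 v‖ ^ 2 = v ⬝ᵥ v := e2_norm_sq v
  have goal_sq : ‖(LinearMap.toContinuousLinearMap (Matrix.toEuclideanLin A)) (E2 v)‖ ^ 2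
      ≤ (t * ‖E2 v‖) ^ 2 := by
    have happ : (LinearMap.toContinuousLinearMap (Matrix.toEuclideanLin A)) (E2 v)
        = E2 (A *ᵥ v) := by
      simp only [LinearMap.coe_toContinuousLinearMap', E2,
        WithLp.equiv_symm_apply, Matrix.toEuclideanLin_apply_piLp_toLp]
    rw [happ, e2_norm_sq, e1]
    calc v ⬝ᵥ ((A * A) *ᵥ v) ≤ t * (t * (v ⬝ᵥ v)) := by
          refine e2.trans ?_
          exact mul_le_mul_of_nonneg_left e3 ht
      _ = (t * ‖E2 v‖) ^ 2 := by rw [← hnx]; ring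
  exact le_of_sq_le_sq (by positivity) goal_sq (norm_nonneg _)

section Frob

attribute [local instance] Matrix.frobeniusSeminormedAddCommGroup

lemma frobNorm_eq_norm {m k : ℕ} (A : Matrix (Fin m) (Fin k) ℝ) : frobNorm A = ‖A‖ := by
  rw [frobNorm, Matrix.frobenius_norm_def, Real.sqrt_eq_rpow]
  simp [Real.norm_eq_abs, sq_abs, one_div]

lemma frobNorm_nonneg {m k : ℕ} (A : Matrix (Fin m) (Fin k) ℝ) : 0 ≤ frobNorm A :=
  Real.sqrt_nonneg _

lemma frobNorm_sum_le {ι : Type*} (s : Finset ι) (f : ι → Mn) :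
    frobNorm (∑ k ∈ s, f k) ≤ ∑ k ∈ s, frobNorm (f k) := by
  simp only [frobNorm_eq_norm]
  exact norm_sum_le s f

lemma frobNorm_add_le (A B : Mn) : frobNorm (A + B) ≤ frobNorm A + frobNorm B := by
  simp only [frobNorm_eq_norm]
  exact norm_add_le A B

end Frob

lemma frobNorm_sq {m k : ℕ} (A : Matrix (Fin m) (Fin k) ℝ) :
    frobNorm A ^ 2 = ∑ i, ∑ j, A i j ^ 2 := Real.sq_sqrt (by positivity)

lemma frobNorm_transpose (A : Mn) : frobNorm Aᵀ = frobNorm A := by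
  rw [frobNorm, frobNorm]
  congr 1
  rw [Finset.sum_comm]
  rfl

lemma frob_spec_mul_left (A B : Mn) : frobNorm (A * B) ≤ specNorm A * frobNorm B := by
  refine le_of_sq_le_sq (mul_nonneg (specNorm_nonneg A) (frobNorm_nonneg B)) ?_
    (frobNorm_nonneg _)
  rw [mul_pow, frobNorm_sq, frobNorm_sq]
  have hL : ∀ j, (∑ i, ((A * B) i j) ^ 2)
      = (A *ᵥ (fun k => B k j)) ⬝ᵥ (A *ᵥ (fun k => B k j)) := by
    intro j
    simp [dotProduct, Matrix.mul_apply, Matrix.mulVec, pow_two]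
  have hR : ∀ j, (∑ i, (B i j) ^ 2) = (fun k => B k j) ⬝ᵥ (fun k => B k j) := by
    intro j
    simp [dotProduct, pow_two]
  calc ∑ i, ∑ j, ((A * B) i j) ^ 2 = ∑ j, ∑ i, ((A * B) i j) ^ 2 := Finset.sum_comm
    _ ≤ ∑ j, specNorm A ^ 2 * ∑ i, (B i j) ^ 2 := by
        refine Finset.sum_le_sum fun j _ => ?_
        rw [hL j, hR j]
        exact dot_sq_le A _
    _ = specNorm A ^ 2 * ∑ j, ∑ i, (B i j) ^ 2 := (Finset.mul_sum _ _ _).symm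
    _ = specNorm A ^ 2 * ∑ i, ∑ j, (B i j) ^ 2 := by rw [Finset.sum_comm]

lemma frob_spec_mul_right (A B : Mn) : frobNorm (A * B) ≤ frobNorm A * specNorm B := by
  calc frobNorm (A * B) = frobNorm ((A * B)ᵀ) := (frobNorm_transpose _).symm
    _ = frobNorm (Bᵀ * Aᵀ) := by rw [Matrix.transpose_mul]
    _ ≤ specNorm Bᵀ * frobNorm Aᵀ := frob_spec_mul_left _ _
    _ = frobNorm A * specNorm B := by
        rw [specNorm_transpose, frobNorm_transpose]; ring

lemma frob_conj (A X B : Mn) :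
    frobNorm (A * X * B) ≤ specNorm A * frobNorm X * specNorm B :=
  calc frobNorm (A * X * B) ≤ frobNorm (A * X) * specNorm B := frob_spec_mul_right _ _
    _ ≤ (specNorm A * frobNorm X) * specNorm B :=
        mul_le_mul_of_nonneg_right (frob_spec_mul_left _ _) (specNorm_nonneg _)

lemma geom_le {r : ℝ} (h0 : 0 ≤ r) (h1 : r < 1) (N : ℕ) :
    ∑ k ∈ Finset.range N, r ^ k ≤ 1 / (1 - r) := by
  rw [le_div_iff₀ (by linarith)]
  nlinarith [geom_sum_mul r N, pow_nonneg h0 N]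

end StmtAux

set_option maxHeartbeats 1000000

open StmtAux

/-- If `H ≻ 0` symmetric, `Δ` symmetric, `c > 0` and `ΓᵀHΓ ⪯ H - c•I`, then
`‖Δ - ΓᵀΔΓ‖_F ≥ (c²/‖H‖²)·‖Δ‖_F`. -/
theorem stmt5 {n : ℕ} (H Δ Γ : Matrix (Fin n) (Fin n) ℝ) (hH : H.PosDef)
    (hΔ : Δ.IsHermitian) (c : ℝ) (hc : 0 < c)
    (hle : (H - c • (1 : Matrix (Fin n) (Fin n) ℝ) - Γᵀ * H * Γ).PosSemidef) :
    c ^ 2 / specNorm H ^ 2 * frobNorm Δ ≤ frobNorm (Δ - Γᵀ * Δ * Γ) := by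
  rcases Nat.eq_zero_or_pos n with hn | hn
  · subst hn
    simp [frobNorm]
  set s := specNorm H with hs
  have hHherm := hH.1
  have hHpsd := hH.posSemidef
  obtain ⟨R, hRpsd, hRR, hRt⟩ :
      ∃ R : Matrix (Fin n) (Fin n) ℝ, R.PosSemidef ∧ R * R = H ∧ Rᵀ = R :=
    open scoped MatrixOrder in
    ⟨CFC.sqrt H, (CFC.sqrt_nonneg H).posSemidef, CFC.sqrt_mul_sqrt_self H hHpsd.nonneg,
      herm_transpose (CFC.sqrt_nonneg H).posSemidef.1⟩
  have hdetR : IsUnit R.det := by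
    have h1 : R.det * R.det = H.det := by rw [← Matrix.det_mul, hRR]
    have h2 := hH.det_pos
    refine isUnit_iff_ne_zero.mpr fun h0 => ?_
    rw [h0, mul_zero] at h1
    rw [← h1] at h2
    exact lt_irrefl _ h2
  have hRinv : R * R⁻¹ = 1 := Matrix.mul_nonsing_inv _ hdetR
  have hinvR : R⁻¹ * R = 1 := Matrix.nonsing_inv_mul _ hdetR
  have hRinvT : R⁻¹ᵀ = R⁻¹ := by rw [Matrix.transpose_nonsing_inv, hRt]
  have hRHR : R⁻¹ * H * R⁻¹ = 1 := by
    rw [← hRR]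
    calc R⁻¹ * (R * R) * R⁻¹ = (R⁻¹ * R) * (R * R⁻¹) := by noncomm_ring
      _ = 1 := by rw [hinvR, hRinv, one_mul]
  have hG : (Γᵀ * H * Γ).PosSemidef := by
    have h := hHpsd.conjTranspose_mul_mul_same Γ
    rwa [Matrix.conjTranspose_eq_transpose_of_trivial] at h
  have hHc : (H - c • 1).PosSemidef := by
    have h := hle.add hG
    rwa [sub_add_cancel] at h
  have hsH : (s • 1 - H).PosSemidef := posSemidef_specNorm_smul_sub hHherm
  have hcs : c ≤ s := by
    have hsum : ((s - c) • (1 : Matrix (Fin n) (Fin n) ℝ)).PosSemidef := by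
      have h := hsH.add hHc
      have e : (s • 1 - H) + (H - c • (1 : Matrix (Fin n) (Fin n) ℝ)) = (s - c) • 1 := by
        rw [sub_smul]; abel
      rwa [e] at h
    have hx := psd_dot hsum (Pi.single (⟨0, hn⟩ : Fin n) (1 : ℝ))
    rw [smul_one_dot] at hx
    have hone : (Pi.single (⟨0, hn⟩ : Fin n) (1 : ℝ)) ⬝ᵥ (Pi.single ⟨0, hn⟩ 1) = 1 := by
      simp [dotProduct, Pi.single_apply]
    rw [hone, mul_one] at hx
    linarith
  have hs0 : 0 < s := lt_of_lt_of_le hc hcs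
  set S := R * Γ * R⁻¹ with hS
  have hSt : Sᵀ = R⁻¹ * Γᵀ * R := by
    rw [hS, Matrix.transpose_mul, Matrix.transpose_mul, hRinvT, hRt, Matrix.mul_assoc]
  have hStS : Sᵀ * S = R⁻¹ * (Γᵀ * H * Γ) * R⁻¹ := by
    rw [hSt, hS, ← hRR]
    noncomm_ring
  set ρ := 1 - c / s with hρ
  have hρ0 : 0 ≤ ρ := by
    have h : c / s ≤ 1 := (div_le_one hs0).mpr hcs
    rw [hρ]; linarith
  have hρ1 : ρ < 1 := by
    have h : 0 < c / s := div_pos hc hs0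
    rw [hρ]; linarith
  have hcsnn : (0:ℝ) ≤ c / s := le_of_lt (div_pos hc hs0)
  have hSbound : (ρ • 1 - Sᵀ * S).PosSemidef := by
    have hpsd := (hle.add (posSemidef_smul hsH hcsnn)).mul_mul_conjTranspose_same R⁻¹
    rw [Matrix.conjTranspose_eq_transpose_of_trivial, hRinvT] at hpsd
    have e : R⁻¹ * ((H - c • 1 - Γᵀ * H * Γ) + (c / s) • (s • 1 - H)) * R⁻¹
        = ρ • 1 - Sᵀ * S := by
      have e1 : (H - c • 1 - Γᵀ * H * Γ) + (c / s) • (s • (1 : Matrix (Fin n) (Fin n) ℝ) - H)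
          = (H - (c / s) • H) - Γᵀ * H * Γ := by
        rw [smul_sub, smul_smul, div_mul_cancel₀ _ (ne_of_gt hs0)]
        abel
      rw [e1, hStS, Matrix.mul_sub, Matrix.sub_mul, Matrix.mul_sub, Matrix.sub_mul,
        Matrix.mul_smul, Matrix.smul_mul, hRHR, hρ, sub_smul, one_smul]
    rwa [e] at hpsd
  have hSS_psd : (Sᵀ * S).PosSemidef := by
    have h := Matrix.posSemidef_conjTranspose_mul_self S
    rwa [Matrix.conjTranspose_eq_transpose_of_trivial] at h
  have hspecS2 : specNorm S * specNorm S ≤ ρ := by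
    rw [← specNorm_transpose_mul_self]
    exact specNorm_le_of_le_smul hSS_psd hρ0 hSbound
  have hP_psd : (R⁻¹ * R⁻¹).PosSemidef := by
    have h := (Matrix.PosSemidef.one).mul_mul_conjTranspose_same R⁻¹
    rwa [mul_one, Matrix.conjTranspose_eq_transpose_of_trivial, hRinvT] at h
  have hPbound : ((1/c) • 1 - R⁻¹ * R⁻¹).PosSemidef := by
    have hpsd := (posSemidef_smul hHc (le_of_lt (one_div_pos.mpr hc))).mul_mul_conjTranspose_same R⁻¹
    rw [Matrix.conjTranspose_eq_transpose_of_trivial, hRinvT] at hpsd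
    have e : R⁻¹ * ((1/c) • (H - c • 1)) * R⁻¹ = (1/c) • 1 - R⁻¹ * R⁻¹ := by
      rw [smul_sub, smul_smul, one_div, inv_mul_cancel₀ (ne_of_gt hc), one_smul,
        Matrix.mul_sub, Matrix.sub_mul, Matrix.mul_smul, Matrix.smul_mul, hRHR,
        Matrix.mul_one]
    rwa [e] at hpsd
  have hspecRinv2 : specNorm R⁻¹ * specNorm R⁻¹ ≤ 1/c := by
    rw [← specNorm_transpose_mul_self, hRinvT]
    exact specNorm_le_of_le_smul hP_psd (le_of_lt (one_div_pos.mpr hc)) hPbound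
  have hspecR2 : specNorm R * specNorm R = s := by
    rw [← specNorm_transpose_mul_self, hRt, hRR]
  have hSk : ∀ k : ℕ, S ^ k * R = R * Γ ^ k := by
    intro k
    induction k with
    | zero => simp
    | succ k ih =>
        rw [pow_succ, pow_succ]
        calc S ^ k * S * R = S ^ k * (R * Γ * (R⁻¹ * R)) := by rw [hS]; noncomm_ring
          _ = S ^ k * R * Γ := by rw [hinvR, Matrix.mul_one]; noncomm_ring
          _ = R * Γ ^ k * Γ := by rw [ih]
          _ = R * (Γ ^ k * Γ) := by rw [Matrix.mul_assoc]
  have hGk : ∀ k : ℕ, Γ ^ k = R⁻¹ * S ^ k * R := by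
    intro k
    calc Γ ^ k = (R⁻¹ * R) * Γ ^ k := by rw [hinvR, Matrix.one_mul]
      _ = R⁻¹ * (R * Γ ^ k) := by rw [Matrix.mul_assoc]
      _ = R⁻¹ * (S ^ k * R) := by rw [hSk k]
      _ = R⁻¹ * S ^ k * R := by rw [← Matrix.mul_assoc]
  have hspecGk : ∀ k : ℕ, specNorm (Γ ^ k) * specNorm (Γ ^ k) ≤ (s / c) * ρ ^ k := by
    intro k
    have hg : specNorm (Γ ^ k) ≤ specNorm R⁻¹ * specNorm (S ^ k) * specNorm R := by
      rw [hGk k]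
      refine (specNorm_mul_le _ R).trans ?_
      exact mul_le_mul_of_nonneg_right (specNorm_mul_le _ _) (specNorm_nonneg R)
    have hσ : specNorm (S ^ k) ≤ specNorm S ^ k := specNorm_pow_le S k
    have hg2 : specNorm (Γ ^ k) ≤ specNorm R⁻¹ * specNorm S ^ k * specNorm R := by
      refine hg.trans ?_
      refine mul_le_mul_of_nonneg_right ?_ (specNorm_nonneg R)
      exact mul_le_mul_of_nonneg_left hσ (specNorm_nonneg R⁻¹)
    have step : specNorm (Γ ^ k) * specNorm (Γ ^ k)
        ≤ (specNorm R⁻¹ * specNorm S ^ k * specNorm R)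
          * (specNorm R⁻¹ * specNorm S ^ k * specNorm R) :=
      mul_self_le_mul_self (specNorm_nonneg _) hg2
    have e : (specNorm R⁻¹ * specNorm S ^ k * specNorm R)
          * (specNorm R⁻¹ * specNorm S ^ k * specNorm R)
        = (specNorm R⁻¹ * specNorm R⁻¹) * (specNorm R * specNorm R)
          * (specNorm S * specNorm S) ^ k := by
      rw [mul_pow]; ring
    have hσk : (specNorm S * specNorm S) ^ k ≤ ρ ^ k :=
      pow_le_pow_left₀ (mul_self_nonneg _) hspecS2 k
    have hfin : (specNorm R⁻¹ * specNorm R⁻¹) * (specNorm R * specNorm R)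
          * (specNorm S * specNorm S) ^ k ≤ (1/c) * s * ρ ^ k := by
      refine mul_le_mul ?_ hσk (pow_nonneg (mul_self_nonneg _) k)
        (mul_nonneg (le_of_lt (one_div_pos.mpr hc)) (le_of_lt hs0))
      rw [hspecR2]
      exact mul_le_mul_of_nonneg_right hspecRinv2 (le_of_lt hs0)
    have e2 : (1/c) * s * ρ ^ k = (s / c) * ρ ^ k := by ring
    calc specNorm (Γ ^ k) * specNorm (Γ ^ k)
        ≤ (specNorm R⁻¹ * specNorm S ^ k * specNorm R)
          * (specNorm R⁻¹ * specNorm S ^ k * specNorm R) := step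
      _ = _ := e
      _ ≤ (1/c) * s * ρ ^ k := hfin
      _ = (s / c) * ρ ^ k := e2
  set E := Δ - Γᵀ * Δ * Γ with hE
  have hdecomp : ∀ N : ℕ,
      Δ = (∑ k ∈ Finset.range N, (Γᵀ) ^ k * E * Γ ^ k) + (Γᵀ) ^ N * Δ * Γ ^ N := by
    intro N
    induction N with
    | zero => simp
    | succ N ih =>
        have tail : (Γᵀ) ^ N * Δ * Γ ^ N
            = (Γᵀ) ^ N * E * Γ ^ N + (Γᵀ) ^ (N + 1) * Δ * Γ ^ (N + 1) := by
          rw [hE, pow_succ (Γᵀ) N, pow_succ' Γ N]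
          noncomm_ring
        rw [Finset.sum_range_succ]
        calc Δ = (∑ k ∈ Finset.range N, (Γᵀ) ^ k * E * Γ ^ k) + (Γᵀ) ^ N * Δ * Γ ^ N := ih
          _ = (∑ k ∈ Finset.range N, (Γᵀ) ^ k * E * Γ ^ k)
              + ((Γᵀ) ^ N * E * Γ ^ N + (Γᵀ) ^ (N + 1) * Δ * Γ ^ (N + 1)) := by rw [← tail]
          _ = _ := by rw [← add_assoc]
  have htermb : ∀ k : ℕ, frobNorm ((Γᵀ) ^ k * E * Γ ^ k) ≤ (s / c) * ρ ^ k * frobNorm E := by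
    intro k
    have h1 := frob_conj ((Γᵀ) ^ k) E (Γ ^ k)
    have h2 : specNorm ((Γᵀ) ^ k) = specNorm (Γ ^ k) := by
      rw [← Matrix.transpose_pow, specNorm_transpose]
    rw [h2] at h1
    refine h1.trans ?_
    have e : specNorm (Γ ^ k) * frobNorm E * specNorm (Γ ^ k)
        = (specNorm (Γ ^ k) * specNorm (Γ ^ k)) * frobNorm E := by ring
    rw [e]
    exact mul_le_mul_of_nonneg_right (hspecGk k) (frobNorm_nonneg E)
  have htailb : ∀ N : ℕ, frobNorm ((Γᵀ) ^ N * Δ * Γ ^ N) ≤ (s / c) * ρ ^ N * frobNorm Δ := by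
    intro N
    have h1 := frob_conj ((Γᵀ) ^ N) Δ (Γ ^ N)
    have h2 : specNorm ((Γᵀ) ^ N) = specNorm (Γ ^ N) := by
      rw [← Matrix.transpose_pow, specNorm_transpose]
    rw [h2] at h1
    refine h1.trans ?_
    have e : specNorm (Γ ^ N) * frobNorm Δ * specNorm (Γ ^ N)
        = (specNorm (Γ ^ N) * specNorm (Γ ^ N)) * frobNorm Δ := by ring
    rw [e]
    exact mul_le_mul_of_nonneg_right (hspecGk N) (frobNorm_nonneg Δ)
  have hbound : ∀ N : ℕ,
      frobNorm Δ ≤ (s / c) * (s / c) * frobNorm E + (s / c) * ρ ^ N * frobNorm Δ := by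
    intro N
    have hsum : frobNorm (∑ k ∈ Finset.range N, (Γᵀ) ^ k * E * Γ ^ k)
        ≤ (s / c) * (s / c) * frobNorm E := by
      refine (frobNorm_sum_le _ _).trans ?_
      have h1 : ∑ k ∈ Finset.range N, frobNorm ((Γᵀ) ^ k * E * Γ ^ k)
          ≤ ∑ k ∈ Finset.range N, (s / c) * ρ ^ k * frobNorm E :=
        Finset.sum_le_sum fun k _ => htermb k
      refine h1.trans ?_
      have e : ∑ k ∈ Finset.range N, (s / c) * ρ ^ k * frobNorm E
          = (s / c) * frobNorm E * ∑ k ∈ Finset.range N, ρ ^ k := by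
        rw [Finset.mul_sum]
        exact Finset.sum_congr rfl fun k _ => by ring
      rw [e]
      have hgeom : ∑ k ∈ Finset.range N, ρ ^ k ≤ 1 / (1 - ρ) := geom_le hρ0 hρ1 N
      have hfr : 1 / (1 - ρ) = s / c := by
        rw [hρ]
        rw [sub_sub_cancel, one_div_div]
      rw [hfr] at hgeom
      calc (s / c) * frobNorm E * ∑ k ∈ Finset.range N, ρ ^ k
          ≤ (s / c) * frobNorm E * (s / c) := by
            refine mul_le_mul_of_nonneg_left hgeom ?_
            exact mul_nonneg (le_of_lt (div_pos hs0 hc)) (frobNorm_nonneg E)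
        _ = (s / c) * (s / c) * frobNorm E := by ring
    calc frobNorm Δ
        = frobNorm ((∑ k ∈ Finset.range N, (Γᵀ) ^ k * E * Γ ^ k) + (Γᵀ) ^ N * Δ * Γ ^ N) := by
          rw [← hdecomp N]
      _ ≤ frobNorm (∑ k ∈ Finset.range N, (Γᵀ) ^ k * E * Γ ^ k)
          + frobNorm ((Γᵀ) ^ N * Δ * Γ ^ N) := frobNorm_add_le _ _
      _ ≤ (s / c) * (s / c) * frobNorm E + (s / c) * ρ ^ N * frobNorm Δ :=
          add_le_add hsum (htailb N)
  have hlim : frobNorm Δ ≤ (s / c) * (s / c) * frobNorm E := by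
    have ht : Filter.Tendsto
        (fun N : ℕ => (s / c) * (s / c) * frobNorm E + (s / c) * ρ ^ N * frobNorm Δ)
        Filter.atTop (nhds ((s / c) * (s / c) * frobNorm E + (s / c) * 0 * frobNorm Δ)) := by
      refine Filter.Tendsto.add tendsto_const_nhds ?_
      exact ((tendsto_pow_atTop_nhds_zero_of_lt_one hρ0 hρ1).const_mul (s / c)).mul_const
        (frobNorm Δ)
    have h := ge_of_tendsto' ht hbound
    simpa using h
  calc c ^ 2 / s ^ 2 * frobNorm Δ
      ≤ c ^ 2 / s ^ 2 * ((s / c) * (s / c) * frobNorm E) :=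
        mul_le_mul_of_nonneg_left hlim (div_nonneg (sq_nonneg c) (sq_nonneg s))
    _ = frobNorm E := by
        field_simp
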